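/- Let P ⊆ ℝ^d be a full-dimensional lattice polytope with irredundant facet presentation h_i(p) = ⟨p,n_i⟩ + a_i ≥ 0 (i = 1,…,r), lattice points A = P ∩ ℤ^d, and positive weights w = (w_m)_{m∈A}. Assume Σ_{i=1}^r n_i = 0 and that β_w is a nonzero constant c on ℝ^d, and set a_P = Σ_{i=1}^r a_i. Then for every u = (u_m)_{m∈A} with u_+ := Σ_{m∈A} u_m > 0 and p = (1/u_+)·Σ_{m∈A} u_m·m, one has for every m ∈ A: w_m β_m(p)/β_w(p) = (w_m/c)·u_+^{−a_P}·∏_{i=1}^r ℓ_i(u)^{h_i(m)}, where ℓ_i(u) = Σ_{m'∈A} h_i(m')·u_{m'}. (This is the explicit Horn/ML-estimate formula determined by the lattice points of P.) -/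

import Mathlib

open Finset

noncomputable section

/-- Lattice distance function `h_i(p) = ⟨p, n_i⟩ + a_i` on `ℝ^d`. -/
def hR {d r : ℕ} (n : Fin r → Fin d → ℤ) (a : Fin r → ℤ) (i : Fin r) (p : Fin d → ℝ) : ℝ :=
  (∑ l, p l * (n i l : ℝ)) + (a i : ℝ)

/-- Lattice distance `h_i(m) = ⟨m, n_i⟩ + a_i` of a lattice point, an integer. -/
def hZ {d r : ℕ} (n : Fin r → Fin d → ℤ) (a : Fin r → ℤ) (i : Fin r) (m : Fin d → ℤ) : ℤ :=
  (∑ l, m l * n i l) + a i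

/-- The polytope `P = {p : h_i(p) ≥ 0 ∀ i}`. -/
def latticePolytope {d r : ℕ} (n : Fin r → Fin d → ℤ) (a : Fin r → ℤ) : Set (Fin d → ℝ) :=
  {p | ∀ i, 0 ≤ hR n a i p}

/-- Coercion of a lattice point of `ℤ^d` to `ℝ^d`. -/
def coeZ {d : ℕ} (m : Fin d → ℤ) : Fin d → ℝ := fun l => (m l : ℝ)

/-- Krasauskas toric blending polynomial `β_m(p) = ∏_i h_i(p)^{h_i(m)}` (with `0^0 = 1`). -/
def toricBeta {d r : ℕ} (n : Fin r → Fin d → ℤ) (a : Fin r → ℤ) (m : Fin d → ℤ)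
    (p : Fin d → ℝ) : ℝ :=
  ∏ i, hR n a i p ^ (hZ n a i m).toNat

/-- `β_w(p) = ∑_{m ∈ A} w_m β_m(p)`. -/
def toricBetaW {d r : ℕ} (n : Fin r → Fin d → ℤ) (a : Fin r → ℤ) (A : Finset (Fin d → ℤ))
    (w : (Fin d → ℤ) → ℝ) (p : Fin d → ℝ) : ℝ :=
  ∑ m ∈ A, w m * toricBeta n a m p

/-- `P` is a full-dimensional lattice polytope with irredundant facet presentation given by
`n_i, a_i` and lattice point set `A = P ∩ ℤ^d`. -/
def IsFacetPresentation {d r : ℕ} (n : Fin r → Fin d → ℤ) (a : Fin r → ℤ)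
    (A : Finset (Fin d → ℤ)) : Prop :=
  IsCompact (latticePolytope n a) ∧
  (interior (latticePolytope n a)).Nonempty ∧
  (∀ m : Fin d → ℤ, m ∈ A ↔ coeZ m ∈ latticePolytope n a) ∧
  latticePolytope n a = convexHull ℝ (coeZ '' (A : Set (Fin d → ℤ))) ∧
  (∀ i, ∃ p ∈ latticePolytope n a, hR n a i p = 0 ∧ ∀ k, k ≠ i → 0 < hR n a k p)

/-- `P` has strict linear precision for the weights `w`:
`β_w(p)·p = ∑_{m ∈ A} w_m β_m(p)·m` for all `p ∈ P`. -/
def StrictLinearPrecision {d r : ℕ} (n : Fin r → Fin d → ℤ) (a : Fin r → ℤ)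
    (A : Finset (Fin d → ℤ)) (w : (Fin d → ℤ) → ℝ) : Prop :=
  ∀ p ∈ latticePolytope n a,
    toricBetaW n a A w p • p = ∑ m ∈ A, (w m * toricBeta n a m p) • coeZ m

/-- If the facet normals sum to zero and `β_w ≡ c ≠ 0` on `ℝ^d`, then
for every `u` with `u_+ > 0` and `p = (1/u_+) ∑ u_m m` one has, for every `m ∈ A`,
`w_m β_m(p)/β_w(p) = (w_m/c) u_+^{-a_P} ∏_i ℓ_i(u)^{h_i(m)}` — the explicit
Horn/ML-estimate formula determined by the lattice points of `P`. -/
theorem horn_formula_of_constant_betaW {d r : ℕ} (hd : 0 < d)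
    (n : Fin r → Fin d → ℤ) (a : Fin r → ℤ) (A : Finset (Fin d → ℤ))
    (hP : IsFacetPresentation n a A)
    (w : (Fin d → ℤ) → ℝ) (hw : ∀ m ∈ A, 0 < w m)
    (hsum : (∑ i, n i) = 0)
    (c : ℝ) (hc : c ≠ 0) (hconst : ∀ p : Fin d → ℝ, toricBetaW n a A w p = c)
    (u : (Fin d → ℤ) → ℝ) (hu : 0 < ∑ m ∈ A, u m)
    (p : Fin d → ℝ) (hp : p = (∑ m ∈ A, u m)⁻¹ • ∑ m ∈ A, u m • coeZ m) :
    ∀ m ∈ A,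
      w m * toricBeta n a m p / toricBetaW n a A w p =
        (w m / c) * (∑ m' ∈ A, u m') ^ (-(∑ i, a i) : ℤ) *
          ∏ i, (∑ m' ∈ A, (hZ n a i m' : ℝ) * u m') ^ (hZ n a i m).toNat := by
  intro m hm
  have hS0 : (∑ m' ∈ A, u m') ≠ 0 := ne_of_gt hu
  -- nonnegativity of hZ on A
  have hZnn : ∀ m' ∈ A, ∀ i, 0 ≤ hZ n a i m' := by
    intro m' hm' i
    have h1 : 0 ≤ hR n a i (coeZ m') := (hP.2.2.1 m').mp hm' i
    have h2 : hR n a i (coeZ m') = (hZ n a i m' : ℝ) := by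
      simp only [hR, hZ, coeZ]
      push_cast
      ring
    rw [h2] at h1
    exact_mod_cast h1
  -- h_i(p) = L i / S
  have hL : ∀ i, hR n a i p =
      (∑ m' ∈ A, (hZ n a i m' : ℝ) * u m') / (∑ m' ∈ A, u m') := by
    intro i
    have hp' : ∀ l, p l = (∑ m' ∈ A, u m')⁻¹ * ∑ m' ∈ A, u m' * (m' l : ℝ) := by
      intro l
      rw [hp]
      simp [coeZ, Finset.sum_apply, Pi.smul_apply, smul_eq_mul]
    unfold hR
    simp only [hp']
    rw [eq_div_iff hS0]
    have pull : ∑ l, ((∑ m' ∈ A, u m')⁻¹ * ∑ m' ∈ A, u m' * (m' l : ℝ)) * (n i l : ℝ)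
        = (∑ m' ∈ A, u m')⁻¹ * ∑ l, (∑ m' ∈ A, u m' * (m' l : ℝ)) * (n i l : ℝ) := by
      rw [Finset.mul_sum]
      exact Finset.sum_congr rfl (fun l _ => by ring)
    have swap : ∑ l, (∑ m' ∈ A, u m' * (m' l : ℝ)) * (n i l : ℝ)
        = (∑ m' ∈ A, (hZ n a i m' : ℝ) * u m') - (a i : ℝ) * (∑ m' ∈ A, u m') := by
      simp only [Finset.sum_mul]
      rw [Finset.sum_comm, Finset.mul_sum, ← Finset.sum_sub_distrib]
      refine Finset.sum_congr rfl (fun m' _ => ?_)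
      simp only [hZ]
      push_cast
      rw [add_mul, Finset.sum_mul, add_sub_cancel_right]
      exact Finset.sum_congr rfl (fun x _ => by ring)
    rw [pull, swap]
    field_simp
    ring
  -- sum of exponents
  have hsumZ : (∑ i, ((hZ n a i m).toNat : ℤ)) = ∑ i, a i := by
    have h1 : ∀ i : Fin r, ((hZ n a i m).toNat : ℤ) = hZ n a i m := fun i =>
      Int.toNat_of_nonneg (hZnn m hm i)
    simp only [h1]
    simp only [hZ]
    rw [Finset.sum_add_distrib]
    have h2 : ∑ i, ∑ l, m l * n i l = 0 := by
      rw [Finset.sum_comm]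
      have : ∀ l, ∑ i, m l * n i l = 0 := by
        intro l
        rw [← Finset.mul_sum]
        have : (∑ i, n i) l = 0 := by rw [hsum]; rfl
        rw [Finset.sum_apply] at this
        rw [this, mul_zero]
      simp [this]
    rw [h2, zero_add]
  -- beta at p
  have hbeta : toricBeta n a m p =
      (∏ i, (∑ m' ∈ A, (hZ n a i m' : ℝ) * u m') ^ (hZ n a i m).toNat) /
        (∑ m' ∈ A, u m') ^ (∑ i, (hZ n a i m).toNat) := by
    unfold toricBeta
    simp only [hL, div_pow]
    rw [Finset.prod_div_distrib, Finset.prod_pow_eq_pow_sum]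
  have hNZ : ((∑ i, (hZ n a i m).toNat : ℕ) : ℤ) = ∑ i, a i := by
    rw [← hsumZ]; push_cast; rfl
  have hzpow : (∑ m' ∈ A, u m') ^ (-(∑ i, a i) : ℤ)
      = ((∑ m' ∈ A, u m') ^ (∑ i, (hZ n a i m).toNat))⁻¹ := by
    rw [← hNZ, zpow_neg, zpow_natCast]
  rw [hconst p, hbeta, hzpow]
  have hSpow : ((∑ m' ∈ A, u m') ^ (∑ i, (hZ n a i m).toNat)) ≠ 0 := pow_ne_zero _ hS0
  simp only [div_eq_mul_inv]
  ring
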